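/- For every finite simple graph G, the max-plus tropical dot product dimension equals the threshold dimension: ρ_T̂(G) = Θ(G). -/
import Mathlib


/-- A max-plus `k`-tropical dot product representation of `G` with threshold `t`:
distinct vertices `x, y` are adjacent iff `max_{1 ≤ i ≤ k} (f(x)_i + f(y)_i) ≥ t`
(equivalently, some coordinate sum is at least `t`). -/
def MaxPlusRep {V : Type*} (G : SimpleGraph V) (k : ℕ) (f : V → Fin k → ℝ) (t : ℝ) : Prop :=
  0 < t ∧ ∀ x y : V, x ≠ y → (G.Adj x y ↔ ∃ i : Fin k, t ≤ f x i + f y i)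

/-- The max-plus tropical dot product dimension `ρ_T̂(G)`. -/
noncomputable def rhoTHat {V : Type*} (G : SimpleGraph V) : ℕ :=
  sInf {k : ℕ | 0 < k ∧ ∃ (f : V → Fin k → ℝ) (t : ℝ), MaxPlusRep G k f t}

/-- `G` is a threshold graph: there are vertex weights `w` and a threshold `t` such that
distinct vertices are adjacent iff the sum of their weights is at least `t`. -/
def IsThresholdGraph {V : Type*} (G : SimpleGraph V) : Prop :=
  ∃ (w : V → ℝ) (t : ℝ), ∀ x y : V, x ≠ y → (G.Adj x y ↔ t ≤ w x + w y)

/-- The threshold dimension `Θ(G)`: the minimum number `k` of threshold graphs on the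
vertex set of `G` whose union (of edge sets) is `G`. -/
noncomputable def thresholdDim {V : Type*} (G : SimpleGraph V) : ℕ :=
  sInf {k : ℕ | 0 < k ∧ ∃ H : Fin k → SimpleGraph V,
    (∀ i, IsThresholdGraph (H i)) ∧ (⨆ i, H i) = G}

/-- The max-plus tropical dot product dimension equals the threshold dimension. -/
theorem stmt_6 {V : Type*} [Fintype V] (G : SimpleGraph V) :
    rhoTHat G = thresholdDim G := by
  unfold rhoTHat thresholdDim
  congr 1
  ext k
  constructor
  · rintro ⟨hk, f, t, ht, hf⟩
    refine ⟨hk, fun i => SimpleGraph.fromRel (fun x y => t ≤ f x i + f y i), ?_, ?_⟩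
    · intro i
      exact ⟨fun x => f x i, t, fun x y hxy => by
        simp only [SimpleGraph.fromRel_adj]
        constructor
        · rintro ⟨-, h | h⟩ <;> linarith
        · intro h; exact ⟨hxy, Or.inl h⟩⟩
    · ext x y
      simp only [SimpleGraph.iSup_adj, SimpleGraph.fromRel_adj]
      constructor
      · rintro ⟨i, hxy, h | h⟩ <;> exact (hf x y hxy).2 ⟨i, by linarith⟩
      · intro h
        obtain ⟨i, hi⟩ := (hf x y h.ne).1 h
        exact ⟨i, h.ne, Or.inl hi⟩
  · rintro ⟨hk, H, hth, hsup⟩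
    choose w s hw using hth
    refine ⟨hk, fun x i => w i x - s i / 2 + 1 / 2, 1, one_pos, fun x y hxy => ?_⟩
    rw [← hsup, SimpleGraph.iSup_adj]
    constructor
    · rintro ⟨i, hi⟩
      exact ⟨i, by have := (hw i x y hxy).1 hi; linarith⟩
    · rintro ⟨i, hi⟩
      exact ⟨i, (hw i x y hxy).2 (by linarith)⟩
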